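/- Let B be a Rota-Baxter operator on a commutative Hopf heap (C, Δ, [−,−,−]) over a field k and let x ∈ C be a group-like element with B(x) = x. Then B is a Rota-Baxter co-operator on the commutative Hopf algebra H_x(C): B is an algebra map for the product a ·_x b = [a,x,b] (i.e. B(a ·_x b) = B(a) ·_x B(b)), and B(a₁) ⊗ B(a₂) = B(a)₁ ·_x B(B(a)₂ ·_x S_x(B(a)₄)) ⊗ B(a)₃ for all a ∈ C, where S_x(a) = [x,a,x]. -/
import Mathlib


open TensorProduct

noncomputable section

variable (k : Type*) [Field k]

section Shuffles

variable (A B P Q R S : Type*)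
  [AddCommGroup A] [Module k A] [AddCommGroup B] [Module k B]
  [AddCommGroup P] [Module k P] [AddCommGroup Q] [Module k Q]
  [AddCommGroup R] [Module k R] [AddCommGroup S] [Module k S]

/-- `(a ⊗ b) ⊗ ((p ⊗ q) ⊗ (r ⊗ s)) ↦ (a ⊗ (q ⊗ r)) ⊗ (b ⊗ (p ⊗ s))`, the shuffle appearing in
the compatibility of a Hopf-heap bracket with comultiplication:
`Δ([a,b,c]) = [a₁,b₂,c₁] ⊗ [a₂,b₁,c₂]`. -/
def sweedlerShuffle :
    ((A ⊗[k] B) ⊗[k] ((P ⊗[k] Q) ⊗[k] (R ⊗[k] S))) →ₗ[k]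
      ((A ⊗[k] (Q ⊗[k] R)) ⊗[k] (B ⊗[k] (P ⊗[k] S))) :=
  (tensorTensorTensorComm k A B (Q ⊗[k] R) (P ⊗[k] S)).toLinearMap ∘ₗ
    (TensorProduct.map LinearMap.id
      ((tensorTensorTensorComm k Q P R S).toLinearMap ∘ₗ
        TensorProduct.map (TensorProduct.comm k P Q).toLinearMap LinearMap.id))

/-- `u₁ ⊗ (u₂ ⊗ (u₃ ⊗ u₄)) ↦ (u₁ ⊗ (u₄ ⊗ u₂)) ⊗ u₃`, the shuffle appearing in the
Rota–Baxter identity. -/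
def rbShuffle :
    (A ⊗[k] (P ⊗[k] (Q ⊗[k] R))) →ₗ[k] ((A ⊗[k] (R ⊗[k] P)) ⊗[k] Q) :=
  (TensorProduct.assoc k A (R ⊗[k] P) Q).symm.toLinearMap ∘ₗ
    TensorProduct.map LinearMap.id
      ((TensorProduct.comm k Q (R ⊗[k] P)).toLinearMap ∘ₗ
        (TensorProduct.assoc k Q R P).toLinearMap ∘ₗ
        (TensorProduct.comm k P (Q ⊗[k] R)).toLinearMap)

end Shuffles

section Mul

variable {C : Type*} [AddCommGroup C] [Module k C]

/-- Right multiplication `a ↦ μ (a ⊗ b)` by a fixed element, for a bilinear product `μ`. -/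
def rmulBy (μ : (C ⊗[k] C) →ₗ[k] C) (b : C) : C →ₗ[k] C :=
  μ ∘ₗ ((TensorProduct.mk k C C).flip b)

end Mul

section Heap

variable {C : Type*} [AddCommGroup C] [Module k C] [Coalgebra k C]

/-- Iterated comultiplication `a ↦ a₁ ⊗ (a₂ ⊗ a₃)`. -/
def comul2 : C →ₗ[k] (C ⊗[k] (C ⊗[k] C)) :=
  (TensorProduct.map LinearMap.id Coalgebra.comul) ∘ₗ Coalgebra.comul

/-- Iterated comultiplication `a ↦ a₁ ⊗ (a₂ ⊗ (a₃ ⊗ a₄))`. -/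
def comul3 : C →ₗ[k] (C ⊗[k] (C ⊗[k] (C ⊗[k] C))) :=
  (TensorProduct.map LinearMap.id (comul2 k)) ∘ₗ Coalgebra.comul

/-- The pointwise ternary bracket `[a,b,c]` of a Hopf heap with structure map `χ`. -/
def br (χ : (C ⊗[k] (C ⊗[k] C)) →ₗ[k] C) (a b c : C) : C := χ (a ⊗ₜ[k] (b ⊗ₜ[k] c))

/-- `x` is a group-like element of the coalgebra `C`. -/
def IsGrouplike (x : C) : Prop :=
  Coalgebra.comul (R := k) x = x ⊗ₜ[k] x ∧ Coalgebra.counit (R := k) x = 1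

/-- `(C, Δ, ε, χ)` is a Hopf heap: `χ` is a coalgebra map `C ⊗ C^cop ⊗ C → C`
(counit and comultiplication conditions, the latter in the Sweedler form
`Δ([a,b,c]) = [a₁,b₂,c₁] ⊗ [a₂,b₁,c₂]`), the bracket is associative
(`[[a,b,c],d,h] = [a,b,[c,d,h]]`), and `[c₁,c₂,a] = ε(c)a = [a,c₁,c₂]`. -/
structure IsHopfHeap (χ : (C ⊗[k] (C ⊗[k] C)) →ₗ[k] C) : Prop where
  counit_br : ∀ a b c : C,
    Coalgebra.counit (R := k) (br k χ a b c) =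
      Coalgebra.counit (R := k) a * Coalgebra.counit (R := k) b * Coalgebra.counit (R := k) c
  comul_br : ∀ a b c : C,
    Coalgebra.comul (R := k) (br k χ a b c) =
      TensorProduct.map χ χ (sweedlerShuffle k C C C C C C
        ((Coalgebra.comul (R := k) a) ⊗ₜ[k]
          ((Coalgebra.comul (R := k) b) ⊗ₜ[k] (Coalgebra.comul (R := k) c))))
  assoc_br : ∀ a b c d h : C,
    br k χ (br k χ a b c) d h = br k χ a b (br k χ c d h)
  left_cancel : ∀ c a : C,
    χ ((TensorProduct.assoc k C C C) ((Coalgebra.comul (R := k) c) ⊗ₜ[k] a)) =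
      Coalgebra.counit (R := k) c • a
  right_cancel : ∀ c a : C,
    χ (a ⊗ₜ[k] (Coalgebra.comul (R := k) c)) = Coalgebra.counit (R := k) c • a

/-- `B` is a Rota–Baxter operator on the Hopf heap `(C, Δ, χ)`:
`B [a,b,c] = [B a, B b, B c]` and
`B(a₁) ⊗ B(a₂) = [B(a)₁, B(B(a)₄), B(B(a)₂)] ⊗ B(a)₃`. -/
structure IsRBOp (χ : (C ⊗[k] (C ⊗[k] C)) →ₗ[k] C) (B : C →ₗ[k] C) : Prop where
  map_br : ∀ a b c : C, B (br k χ a b c) = br k χ (B a) (B b) (B c)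
  rb : ∀ a : C,
    TensorProduct.map B B (Coalgebra.comul (R := k) a) =
      TensorProduct.map (χ ∘ₗ TensorProduct.map LinearMap.id (TensorProduct.map B B))
        LinearMap.id (rbShuffle k C C C C (comul3 k (B a)))

/-- The multiplication `a ·ₓ b = [a, x, b]` of the Hopf algebra `H_x(C)`, as a linear map. -/
def heapMul (χ : (C ⊗[k] (C ⊗[k] C)) →ₗ[k] C) (x : C) : (C ⊗[k] C) →ₗ[k] C :=
  χ ∘ₗ TensorProduct.map LinearMap.id (TensorProduct.mk k C C x)

/-- The antipode `S_x(a) = [x, a, x]` of the Hopf algebra `H_x(C)`, as a linear map. -/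
def heapAntipode (χ : (C ⊗[k] (C ⊗[k] C)) →ₗ[k] C) (x : C) : C →ₗ[k] C :=
  χ ∘ₗ (TensorProduct.mk k C (C ⊗[k] C) x) ∘ₗ ((TensorProduct.mk k C C).flip x)

end Heap

section HeapHom

variable {C D : Type*} [AddCommGroup C] [Module k C] [Coalgebra k C]
  [AddCommGroup D] [Module k D] [Coalgebra k D]

/-- `f` is a homomorphism of Hopf heaps: a coalgebra map preserving the bracket. -/
def IsHeapHom (χC : (C ⊗[k] (C ⊗[k] C)) →ₗ[k] C) (χD : (D ⊗[k] (D ⊗[k] D)) →ₗ[k] D)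
    (f : C →ₗ[k] D) : Prop :=
  (∀ a : C, Coalgebra.comul (R := k) (f a) = TensorProduct.map f f (Coalgebra.comul (R := k) a)) ∧
  (∀ a : C, Coalgebra.counit (R := k) (f a) = Coalgebra.counit (R := k) a) ∧
  (∀ a b c : C, f (br k χC a b c) = br k χD (f a) (f b) (f c))

end HeapHom

section HopfAlg

variable (H : Type*) [Ring H] [HopfAlgebra k H]

/-- The Hopf-heap structure map `a ⊗ b ⊗ c ↦ a · S(b) · c` of a Hopf algebra. -/
def hopfHeapChi : (H ⊗[k] (H ⊗[k] H)) →ₗ[k] H :=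
  (LinearMap.mul' k H) ∘ₗ TensorProduct.map LinearMap.id
    ((LinearMap.mul' k H) ∘ₗ TensorProduct.map (HopfAlgebra.antipode (R := k)) LinearMap.id)

/-- The triple multiplication `a ⊗ (b ⊗ c) ↦ a·(b·c)`. -/
def mulTriple : (H ⊗[k] (H ⊗[k] H)) →ₗ[k] H :=
  (LinearMap.mul' k H) ∘ₗ TensorProduct.map LinearMap.id (LinearMap.mul' k H)

end HopfAlg

end
/-- a Rota–Baxter operator `B` on a commutative Hopf heap `(C,χ)` with
`B x = x` for a group-like `x` is a Rota–Baxter co-operator on the commutative Hopf algebra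
`H_x(C)`: `B` is an algebra map for `·ₓ` and
`B(a₁) ⊗ B(a₂) = B(a)₁ ·ₓ B(B(a)₂ ·ₓ S_x(B(a)₄)) ⊗ B(a)₃`. -/
theorem rbOp_gives_rb_cooperator {k : Type*} [Field k] {C : Type*} [AddCommGroup C]
    [Module k C] [Coalgebra k C] (χ : (C ⊗[k] (C ⊗[k] C)) →ₗ[k] C) (hχ : IsHopfHeap k χ)
    (hcomm : ∀ a b c : C, br k χ a b c = br k χ c b a)
    (B : C →ₗ[k] C) (hB : IsRBOp k χ B)
    (x : C) (hx : IsGrouplike k x) (hBx : B x = x) :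
    -- `B` is multiplicative for `·ₓ`
    (∀ a b : C, B (heapMul k χ x (a ⊗ₜ[k] b)) = heapMul k χ x (B a ⊗ₜ[k] B b)) ∧
    -- the Rota–Baxter co-operator identity in `H_x(C)`
    (∀ a : C, TensorProduct.map B B (Coalgebra.comul (R := k) a) =
      TensorProduct.map
        ((heapMul k χ x) ∘ₗ TensorProduct.map LinearMap.id
          (B ∘ₗ (heapMul k χ x) ∘ₗ (TensorProduct.comm k C C).toLinearMap ∘ₗ
            TensorProduct.map (heapAntipode k χ x) LinearMap.id))
        LinearMap.id (rbShuffle k C C C C (comul3 k (B a)))) := by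
  obtain ⟨hxΔ, hxε⟩ := hx
  have hxxl : ∀ a : C, br k χ x x a = a := by
    intro a
    have h := hχ.left_cancel x a
    rw [hxΔ, hxε] at h
    simpa [br] using h
  have hxxr : ∀ a : C, br k χ a x x = a := by
    intro a
    have h := hχ.right_cancel x a
    rw [hxΔ, hxε] at h
    simpa [br] using h
  have hmul : ∀ a b : C, heapMul k χ x (a ⊗ₜ[k] b) = br k χ a x b := by
    intro a b; simp [heapMul, br]
  have hanti : ∀ a : C, heapAntipode k χ x a = br k χ x a x := by
    intro a; simp [heapAntipode, br]
  have hmul' : ∀ a b : C, B (heapMul k χ x (a ⊗ₜ[k] b)) = heapMul k χ x (B a ⊗ₜ[k] B b) := by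
    intro a b
    rw [hmul, hmul, hB.map_br, hBx]
  refine ⟨hmul', ?_⟩
  intro a
  have hmaps : (χ ∘ₗ TensorProduct.map LinearMap.id (TensorProduct.map B B)) =
      ((heapMul k χ x) ∘ₗ TensorProduct.map LinearMap.id
          (B ∘ₗ (heapMul k χ x) ∘ₗ (TensorProduct.comm k C C).toLinearMap ∘ₗ
            TensorProduct.map (heapAntipode k χ x) LinearMap.id)) := by
    ext p q r
    simp only [LinearMap.coe_comp, Function.comp_apply, TensorProduct.map_tmul,
      LinearMap.id_coe, id_eq, LinearEquiv.coe_coe, TensorProduct.comm_tmul,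
      LinearMap.compr₂_apply, TensorProduct.mk_apply, TensorProduct.AlgebraTensorModule.curry_apply,
      TensorProduct.curry_apply, LinearMap.coe_restrictScalars]
    rw [hanti, hmul, hmul]
    have h1 : B (br k χ r x (br k χ x q x)) = br k χ (B r) x (br k χ x (B q) x) := by
      rw [hB.map_br, hB.map_br, hBx]
    rw [h1]
    rw [← hχ.assoc_br (B r) x x (B q) x, hxxr (B r), hcomm (B r) (B q) x,
      ← hχ.assoc_br p x x (B q) (B r), hxxr p]
    rfl
  rw [hB.rb a, hmaps]
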